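/- There exist constants c, C > 0 such that for every even integer k ≥ 4: c · k^{−5/2} ≤ μ_k(φ)² ≤ C · k^{−5/2}, where μ_k(φ) is the k-th Hermite coefficient of the ReLU function. -/

import Mathlib

open MeasureTheory ProbabilityTheory

noncomputable section

/-- The ReLU function. -/
def relu (x : ℝ) : ℝ := max x 0

/-- The `k`-th probabilists' Hermite polynomial, as a function `ℝ → ℝ`. -/
def hermiteFun (k : ℕ) (z : ℝ) : ℝ := Polynomial.aeval z (Polynomial.hermite k)

/-- The `k`-th Hermite coefficient `μ_k(f) = E[f(g) h_k(g)] / √(E[h_k(g)²])`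
of a function `f : ℝ → ℝ`, with `g` a standard Gaussian. -/
def hermiteCoeff (f : ℝ → ℝ) (k : ℕ) : ℝ :=
  (∫ z, f z * hermiteFun k z ∂(gaussianReal 0 1)) /
    Real.sqrt (∫ z, hermiteFun k z ^ 2 ∂(gaussianReal 0 1))

open Polynomial Real Filter
open scoped NNReal ENNReal

lemma pdf01 (x : ℝ) : gaussianPDFReal 0 1 x = (Real.sqrt (2*π))⁻¹ * Real.exp (-(x^2/2)) := by
  unfold gaussianPDFReal
  norm_num
  left
  ring_nf

lemma integrable_poly_gauss (p : Polynomial ℝ) :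
    Integrable fun x : ℝ => eval x p * Real.exp (-(x^2/2)) := by
  induction p using Polynomial.induction_on' with
  | add p q hp hq => simpa [add_mul, Pi.add_def] using hp.add hq
  | monomial n a =>
    simp only [eval_monomial]
    have h : Integrable fun x : ℝ => x ^ (n:ℝ) * Real.exp (-(1/2) * x^2) :=
      integrable_rpow_mul_exp_neg_mul_sq (s := (n:ℝ)) one_half_pos
        (lt_of_lt_of_le neg_one_lt_zero (Nat.cast_nonneg n))
    simp_rw [Real.rpow_natCast] at h
    have h2 : Integrable fun x : ℝ => x ^ n * Real.exp (-(x^2/2)) := by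
      refine h.congr (Filter.Eventually.of_forall fun x => ?_)
      congr 1
      ring
    simpa [mul_assoc] using h2.const_mul a

lemma tendsto_pow_gauss (n : ℕ) :
    Tendsto (fun x : ℝ => x ^ n * Real.exp (-(x^2/2))) atTop (nhds 0) := by
  have h := (tendsto_pow_mul_exp_neg_atTop_nhds_zero n).const_mul (Real.exp (1/2))
  rw [mul_zero] at h
  refine squeeze_zero' ?_ ?_ h
  · filter_upwards [eventually_ge_atTop (0:ℝ)] with x hx
    positivity
  · filter_upwards [eventually_ge_atTop (0:ℝ)] with x hx
    have h1 : -(x^2/2) ≤ 1/2 - x := by nlinarith [sq_nonneg (x-1)]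
    have h2 : Real.exp (-(x^2/2)) ≤ Real.exp (1/2 - x) := Real.exp_le_exp.2 h1
    have h3 : x ^ n * Real.exp (-(x^2/2)) ≤ x ^ n * Real.exp (1/2 - x) := by
      have := pow_nonneg hx n
      nlinarith [Real.exp_pos (-(x^2/2))]
    refine h3.trans (le_of_eq ?_)
    rw [Real.exp_sub, Real.exp_neg]
    field_simp

lemma tendsto_poly_gauss_atTop (p : Polynomial ℝ) :
    Tendsto (fun x : ℝ => eval x p * Real.exp (-(x^2/2))) atTop (nhds 0) := by
  induction p using Polynomial.induction_on' with
  | add p q hp hq => simpa [add_mul] using hp.add hq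
  | monomial n a =>
    simp only [eval_monomial]
    have := (tendsto_pow_gauss n).const_mul a
    rw [mul_zero] at this
    simpa [mul_assoc] using this

lemma tendsto_poly_gauss_atBot (p : Polynomial ℝ) :
    Tendsto (fun x : ℝ => eval x p * Real.exp (-(x^2/2))) atBot (nhds 0) := by
  have h := (tendsto_poly_gauss_atTop (p.comp (-X))).comp tendsto_neg_atBot_atTop
  refine h.congr fun x => ?_
  simp [eval_comp, neg_sq]

lemma hasDerivAt_poly_gauss (p : Polynomial ℝ) (x : ℝ) :
    HasDerivAt (fun x : ℝ => eval x p * Real.exp (-(x^2/2)))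
      (eval x (derivative p - X * p) * Real.exp (-(x^2/2))) x := by
  have h1 : HasDerivAt (fun x : ℝ => eval x p) (eval x (derivative p)) x := p.hasDerivAt x
  have h2 : HasDerivAt (fun x : ℝ => Real.exp (-(x^2/2))) (-x * Real.exp (-(x^2/2))) x := by
    have : HasDerivAt (fun x : ℝ => -(x^2/2)) (-x) x := by
      simpa using ((hasDerivAt_pow 2 x).div_const 2).fun_neg
    have h4 := this.exp
    convert h4 using 1
    ring
  have := h1.mul h2
  refine this.congr_deriv ?_
  simp only [eval_sub, eval_mul, eval_X]
  ring

lemma key_line (p : Polynomial ℝ) :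
    ∫ x : ℝ, eval x (derivative p - X * p) * Real.exp (-(x^2/2)) = 0 := by
  have hint : Integrable fun x : ℝ => eval x (derivative p - X * p) * Real.exp (-(x^2/2)) :=
    integrable_poly_gauss _
  rw [← setIntegral_univ, ← Set.Iic_union_Ioi (a := (0:ℝ)),
    setIntegral_union (Set.Iic_disjoint_Ioi le_rfl) measurableSet_Ioi
      hint.integrableOn hint.integrableOn]
  rw [integral_Iic_of_hasDerivAt_of_tendsto' (fun x _ => hasDerivAt_poly_gauss p x)
      hint.integrableOn (tendsto_poly_gauss_atBot p),
    integral_Ioi_of_hasDerivAt_of_tendsto' (fun x _ => hasDerivAt_poly_gauss p x)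
      hint.integrableOn (tendsto_poly_gauss_atTop p)]
  ring

lemma key_Ioi (p : Polynomial ℝ) :
    ∫ x in Set.Ioi (0:ℝ), eval x (derivative p - X * p) * Real.exp (-(x^2/2))
      = - eval 0 p := by
  have hint : Integrable fun x : ℝ => eval x (derivative p - X * p) * Real.exp (-(x^2/2)) :=
    integrable_poly_gauss _
  rw [integral_Ioi_of_hasDerivAt_of_tendsto' (fun x _ => hasDerivAt_poly_gauss p x)
      hint.integrableOn (tendsto_poly_gauss_atTop p)]
  simp

def PR (n : ℕ) : Polynomial ℝ := (Polynomial.hermite n).map (algebraMap ℤ ℝ)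

lemma PR_succ (n : ℕ) : PR (n+1) = X * PR n - derivative (PR n) := by
  unfold PR
  rw [hermite_succ, Polynomial.map_sub, Polynomial.map_mul, map_X, derivative_map]

lemma herm_deriv (n : ℕ) : derivative (hermite (n+1)) = ((n : Polynomial ℤ)+1) * hermite n := by
  induction n with
  | zero => simp [hermite_one, hermite_zero]
  | succ n ih =>
    rw [hermite_succ (n+1), derivative_sub, derivative_mul, derivative_X, one_mul, ih,
      derivative_mul, hermite_succ n]
    simp only [derivative_add, derivative_natCast, derivative_one, add_zero, zero_add]
    push_cast
    ring

lemma PR_deriv (n : ℕ) : derivative (PR (n+1)) = ((n : Polynomial ℝ)+1) * PR n := by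
  unfold PR
  rw [derivative_map, herm_deriv, Polynomial.map_mul, Polynomial.map_add,
    Polynomial.map_natCast, Polynomial.map_one]

lemma idN (n : ℕ) : derivative (PR n * PR (n+1)) - X * (PR n * PR (n+1))
    = ((n : Polynomial ℝ)+1) * (PR n)^2 - (PR (n+1))^2 := by
  have h1 := PR_deriv n
  have h2 := PR_succ n
  have h3 : derivative (PR n) = X * PR n - PR (n+1) := by rw [h2]; ring
  rw [derivative_mul, h1, h3]
  ring

lemma idQ (n : ℕ) :
    derivative (-(PR (n+2) + ((n : Polynomial ℝ)+2) * PR n)) - X * (-(PR (n+2) + ((n : Polynomial ℝ)+2) * PR n))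
      = X * PR (n+2) := by
  have h1 : derivative (PR (n+2)) = ((n : Polynomial ℝ)+1+1) * PR (n+1) := by
    rw [PR_deriv (n+1)]; push_cast; ring
  have h3 : derivative (PR n) = X * PR n - PR (n+1) := by rw [PR_succ n]; ring
  rw [derivative_neg, derivative_add, h1, derivative_mul, h3,
    show PR (n+2) = X * PR (n+1) - derivative (PR (n+1)) from PR_succ (n+1), PR_deriv n]
  simp only [derivative_add, derivative_natCast, derivative_one, derivative_ofNat,
    add_zero, zero_add, zero_mul]
  push_cast
  ring

lemma norm_rec (n : ℕ) :
    ∫ x : ℝ, (eval x (PR (n+1)))^2 * Real.exp (-(x^2/2))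
      = ((n:ℝ)+1) * ∫ x : ℝ, (eval x (PR n))^2 * Real.exp (-(x^2/2)) := by
  have h := key_line (PR n * PR (n+1))
  rw [idN n] at h
  have h1 : Integrable fun x : ℝ => eval x (C ((n:ℝ)+1) * (PR n)^2) * Real.exp (-(x^2/2)) :=
    integrable_poly_gauss _
  have h2 : Integrable fun x : ℝ => eval x ((PR (n+1))^2) * Real.exp (-(x^2/2)) :=
    integrable_poly_gauss _
  simp only [eval_sub, eval_mul, eval_natCast, eval_add, eval_one, eval_C, eval_pow,
    sub_mul] at h
  simp only [eval_mul, eval_natCast, eval_add, eval_one, eval_C, eval_pow] at h1 h2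
  rw [integral_sub h1 h2, sub_eq_zero] at h
  rw [← h]
  simp_rw [mul_assoc]
  rw [integral_const_mul]

lemma norm_val (n : ℕ) :
    ∫ x : ℝ, (eval x (PR n))^2 * Real.exp (-(x^2/2))
      = (n.factorial : ℝ) * Real.sqrt (2*π) := by
  induction n with
  | zero =>
    have : ∀ x : ℝ, (eval x (PR 0))^2 * Real.exp (-(x^2/2))
        = Real.exp (-(1/2) * x^2) := by
      intro x
      unfold PR
      rw [hermite_zero]
      simp only [Polynomial.map_C, eval_C]
      norm_num
      congr 1
      ring
    simp_rw [this]
    rw [integral_gaussian, show π / (1/2 : ℝ) = 2*π by ring]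
    norm_num
  | succ n ih =>
    rw [norm_rec n, ih, Nat.factorial_succ]
    push_cast
    ring

lemma relu_int (n : ℕ) :
    ∫ x in Set.Ioi (0:ℝ), x * eval x (PR (n+2)) * Real.exp (-(x^2/2))
      = eval 0 (PR (n+2)) + ((n:ℝ)+2) * eval 0 (PR n) := by
  have h := key_Ioi (-(PR (n+2) + ((n : Polynomial ℝ)+2) * PR n))
  rw [idQ n] at h
  simp only [eval_mul, eval_X] at h
  rw [h]
  simp [eval_mul, eval_natCast]


lemma hermiteFun_eq (k : ℕ) (z : ℝ) : hermiteFun k z = eval z (PR k) := by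
  unfold hermiteFun PR
  rw [aeval_def, eval_map]

lemma gauss_int (f : ℝ → ℝ) :
    ∫ z, f z ∂(gaussianReal 0 1) = ∫ x, gaussianPDFReal 0 1 x * f x := by
  rw [gaussianReal_of_var_ne_zero 0 one_ne_zero]
  unfold gaussianPDF
  have : (fun x => ENNReal.ofReal (gaussianPDFReal 0 1 x))
      = fun x => ((Real.toNNReal (gaussianPDFReal 0 1 x) : ℝ≥0) : ℝ≥0∞) := rfl
  rw [this, integral_withDensity_eq_integral_smul
    ((measurable_gaussianPDFReal 0 1).real_toNNReal)]
  congr 1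
  ext x
  simp [NNReal.smul_def, Real.coe_toNNReal _ (gaussianPDFReal_nonneg 0 1 x)]

lemma gauss_int' (f : ℝ → ℝ) :
    ∫ z, f z ∂(gaussianReal 0 1)
      = (Real.sqrt (2*π))⁻¹ * ∫ x, f x * Real.exp (-(x^2/2)) := by
  rw [gauss_int, ← integral_const_mul]
  congr 1
  ext x
  rw [pdf01]
  ring

/-- the squared norm -/
lemma norm_gauss (k : ℕ) :
    ∫ z, hermiteFun k z ^ 2 ∂(gaussianReal 0 1) = (k.factorial : ℝ) := by
  rw [gauss_int']
  simp_rw [hermiteFun_eq]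
  rw [norm_val k]
  rw [show (Real.sqrt (2*π))⁻¹ * ((k.factorial : ℝ) * Real.sqrt (2*π))
    = (k.factorial : ℝ) * ((Real.sqrt (2*π))⁻¹ * Real.sqrt (2*π)) by ring]
  rw [inv_mul_cancel₀ (by positivity), mul_one]

lemma relu_gauss (n : ℕ) :
    ∫ z, relu z * hermiteFun (n+2) z ∂(gaussianReal 0 1)
      = (Real.sqrt (2*π))⁻¹ * (eval 0 (PR (n+2)) + ((n:ℝ)+2) * eval 0 (PR n)) := by
  rw [gauss_int']
  congr 1
  have hind : (fun x : ℝ => relu x * hermiteFun (n+2) x * Real.exp (-(x^2/2)))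
      = Set.indicator (Set.Ioi (0:ℝ))
          (fun x => x * eval x (PR (n+2)) * Real.exp (-(x^2/2))) := by
    funext x
    by_cases hx : x ∈ Set.Ioi (0:ℝ)
    · rw [Set.indicator_of_mem hx, hermiteFun_eq]
      unfold relu
      rw [max_eq_left (le_of_lt hx)]
    · rw [Set.indicator_of_notMem hx]
      unfold relu
      rw [max_eq_right (by simpa using hx)]
      ring
  rw [hind, integral_indicator measurableSet_Ioi, relu_int n]

open scoped Nat in
lemma eval0 (m : ℕ) : eval 0 (PR (2*m)) = (-1:ℝ)^m * ((2*m-1)‼ : ℕ) := by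
  unfold PR
  rw [← coeff_zero_eq_eval_zero, coeff_map,
    show 2*m = 2*m+0 by ring, coeff_hermite_explicit m 0]
  push_cast
  simp

open scoped Nat in
lemma dfac_succ (m : ℕ) : (2*m+1)‼ = (2*m+1) * (2*m-1)‼ := by
  cases m with
  | zero => decide
  | succ j =>
    rw [show 2*(j+1)+1 = (2*j+1)+2 by ring, Nat.doubleFactorial_add_two,
      show 2*(j+1)-1 = 2*j+1 by omega]

open scoped Nat in
lemma Eval (m : ℕ) :
    eval 0 (PR (2*m+2)) + ((2*(m:ℝ))+2) * eval 0 (PR (2*m))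
      = (-1:ℝ)^m * ((2*m-1)‼ : ℕ) := by
  rw [show 2*m+2 = 2*(m+1) by ring, eval0 (m+1), eval0 m,
    show 2*(m+1)-1 = 2*m+1 by omega, dfac_succ m]
  push_cast
  ring


open scoped Nat in
lemma coeff_sq (m : ℕ) :
    hermiteCoeff relu (2*m+2) ^ 2
      = (((2*m-1)‼ : ℕ) : ℝ)^2 / (2*π*((2*m+2).factorial : ℕ)) := by
  unfold hermiteCoeff
  rw [show 2*m+2 = 2*m+2 from rfl]
  have h1 := relu_gauss (2*m)
  rw [show (((2*m:ℕ)):ℝ)+2 = 2*(m:ℝ)+2 by push_cast; ring] at h1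
  rw [h1, Eval m, norm_gauss]
  rw [div_pow, Real.sq_sqrt (by positivity), mul_pow, mul_pow, inv_pow,
    Real.sq_sqrt (by positivity), ← pow_mul, mul_comm m 2, pow_mul]
  norm_num
  ring

open scoped Nat in
def Bseq (m : ℕ) : ℝ := (((2*m-1)‼ : ℕ) : ℝ)^2 / (((2*m+2).factorial : ℕ) : ℝ)

lemma Bseq_pos (m : ℕ) : 0 < Bseq m := by
  unfold Bseq
  have h1 := Nat.doubleFactorial_pos (2*m-1)
  have h2 := Nat.factorial_pos (2*m+2)
  positivity

lemma Bseq_rec (m : ℕ) :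
    Bseq (m+1) = Bseq m * ((2*(m:ℝ)+1)^2 / ((2*(m:ℝ)+3)*(2*(m:ℝ)+4))) := by
  unfold Bseq
  rw [show 2*(m+1)-1 = 2*m+1 by omega, dfac_succ m,
    show 2*(m+1)+2 = ((2*m+2)+1)+1 by ring, Nat.factorial_succ ((2*m+2)+1),
    Nat.factorial_succ (2*m+2)]
  have hf : (((2*m+2).factorial : ℕ) : ℝ) ≠ 0 := by
    exact_mod_cast (Nat.factorial_pos _).ne'
  push_cast
  field_simp
  ring

lemma sqrt_ineq {a b u v : ℝ} (ha : 0 ≤ a) (hb : 0 ≤ b) (hu : 0 ≤ u) (hv : 0 ≤ v)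
    (h : a^2*u ≤ b^2*v) : a * Real.sqrt u ≤ b * Real.sqrt v := by
  calc a * Real.sqrt u = Real.sqrt (a^2*u) := by
        rw [Real.sqrt_mul (sq_nonneg a), Real.sqrt_sq ha]
    _ ≤ Real.sqrt (b^2*v) := Real.sqrt_le_sqrt h
    _ = b * Real.sqrt v := by rw [Real.sqrt_mul (sq_nonneg b), Real.sqrt_sq hb]

lemma Bseq_one : Bseq 1 = 1/24 := by
  unfold Bseq
  norm_num [Nat.doubleFactorial, Nat.factorial]

lemma sqrt_four : Real.sqrt (2*(1:ℝ)+2) = 2 := by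
  rw [show 2*(1:ℝ)+2 = 2^2 by norm_num, Real.sqrt_sq (by norm_num)]

lemma P_bound (m : ℕ) (hm : 1 ≤ m) :
    Bseq m * ((2*(m:ℝ)+2)^2 * Real.sqrt (2*(m:ℝ)+2)) ≤ 4/3 := by
  induction m, hm using Nat.le_induction with
  | base => push_cast; rw [Bseq_one, sqrt_four]; norm_num
  | succ m hm ih =>
    push_cast
    have hm0 : (0:ℝ) ≤ m := Nat.cast_nonneg m
    have hB := (Bseq_pos m).le
    have key : ((2*(m:ℝ)+1)^2 / ((2*(m:ℝ)+3)*(2*(m:ℝ)+4)))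
          * ((2*(m:ℝ)+4)^2 * Real.sqrt (2*(m:ℝ)+4))
        ≤ (2*(m:ℝ)+2)^2 * Real.sqrt (2*(m:ℝ)+2) := by
      have hrw : ((2*(m:ℝ)+1)^2 / ((2*(m:ℝ)+3)*(2*(m:ℝ)+4)))
            * ((2*(m:ℝ)+4)^2 * Real.sqrt (2*(m:ℝ)+4))
          = ((2*(m:ℝ)+1)^2 * (2*(m:ℝ)+4) / (2*(m:ℝ)+3)) * Real.sqrt (2*(m:ℝ)+4) := by
        field_simp
      rw [hrw]
      apply sqrt_ineq (by positivity) (by positivity) (by positivity) (by positivity)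
      rw [div_pow, div_mul_eq_mul_div, div_le_iff₀ (by positivity)]
      nlinarith [hm0, sq_nonneg ((m:ℝ)), pow_pos (show (0:ℝ) < (m:ℝ)+1 by linarith) 3,
        mul_nonneg (mul_nonneg hm0 hm0) hm0]
    calc Bseq (m+1) * ((2*((m:ℝ)+1)+2)^2 * Real.sqrt (2*((m:ℝ)+1)+2))
        = Bseq m * (((2*(m:ℝ)+1)^2 / ((2*(m:ℝ)+3)*(2*(m:ℝ)+4)))
            * ((2*(m:ℝ)+4)^2 * Real.sqrt (2*(m:ℝ)+4))) := by
          rw [Bseq_rec m]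
          push_cast
          ring_nf
      _ ≤ Bseq m * ((2*(m:ℝ)+2)^2 * Real.sqrt (2*(m:ℝ)+2)) := by
          exact mul_le_mul_of_nonneg_left key hB
      _ ≤ 4/3 := ih

lemma Q_bound (m : ℕ) (hm : 1 ≤ m) :
    2/3 ≤ Bseq m * ((2*(m:ℝ)+2) * Real.sqrt (2*(m:ℝ)+2) * (2*(m:ℝ))) := by
  induction m, hm using Nat.le_induction with
  | base => push_cast; rw [Bseq_one, sqrt_four]; norm_num
  | succ m hm ih =>
    push_cast
    have hm1 : (1:ℝ) ≤ m := by exact_mod_cast hm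
    have hB := (Bseq_pos m).le
    have key : (2*(m:ℝ)+2) * Real.sqrt (2*(m:ℝ)+2) * (2*(m:ℝ))
        ≤ ((2*(m:ℝ)+1)^2 / ((2*(m:ℝ)+3)*(2*(m:ℝ)+4)))
          * ((2*(m:ℝ)+4) * Real.sqrt (2*(m:ℝ)+4) * (2*(m:ℝ)+2)) := by
      have hrw : ((2*(m:ℝ)+1)^2 / ((2*(m:ℝ)+3)*(2*(m:ℝ)+4)))
            * ((2*(m:ℝ)+4) * Real.sqrt (2*(m:ℝ)+4) * (2*(m:ℝ)+2))
          = ((2*(m:ℝ)+1)^2 * (2*(m:ℝ)+2) / (2*(m:ℝ)+3)) * Real.sqrt (2*(m:ℝ)+4) := by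
        field_simp
      have hrw2 : (2*(m:ℝ)+2) * Real.sqrt (2*(m:ℝ)+2) * (2*(m:ℝ))
          = ((2*(m:ℝ)+2) * (2*(m:ℝ))) * Real.sqrt (2*(m:ℝ)+2) := by ring
      rw [hrw, hrw2]
      apply sqrt_ineq (by positivity) (by positivity) (by positivity) (by positivity)
      rw [div_pow, div_mul_eq_mul_div, le_div_iff₀ (by positivity)]
      nlinarith [hm1, sq_nonneg ((m:ℝ)), sq_nonneg ((m:ℝ)-1),
        mul_nonneg (mul_nonneg (Nat.cast_nonneg m : (0:ℝ) ≤ m) (Nat.cast_nonneg m : (0:ℝ) ≤ m)) (Nat.cast_nonneg m : (0:ℝ) ≤ m)]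
    calc (2:ℝ)/3 ≤ Bseq m * ((2*(m:ℝ)+2) * Real.sqrt (2*(m:ℝ)+2) * (2*(m:ℝ))) := ih
      _ ≤ Bseq m * (((2*(m:ℝ)+1)^2 / ((2*(m:ℝ)+3)*(2*(m:ℝ)+4)))
            * ((2*(m:ℝ)+4) * Real.sqrt (2*(m:ℝ)+4) * (2*(m:ℝ)+2))) :=
          mul_le_mul_of_nonneg_left key hB
      _ = Bseq (m+1) * ((2*((m:ℝ)+1)+2) * Real.sqrt (2*((m:ℝ)+1)+2) * (2*((m:ℝ)+1))) := by
          rw [Bseq_rec m]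
          push_cast
          ring_nf

/-- the even Hermite coefficients of ReLU satisfy
`μ_k(φ)² = Θ(k^{-5/2})`. -/
theorem statement12 :
    ∃ c C : ℝ, 0 < c ∧ 0 < C ∧
      ∀ k : ℕ, 4 ≤ k → Even k →
        c * (k : ℝ) ^ (-(5 : ℝ) / 2) ≤ hermiteCoeff relu k ^ 2 ∧
        hermiteCoeff relu k ^ 2 ≤ C * (k : ℝ) ^ (-(5 : ℝ) / 2) := by
  refine ⟨1/(3*π), 2/(3*π), by positivity, by positivity, ?_⟩
  intro k hk4 hkeven
  obtain ⟨m, hm1, rfl⟩ : ∃ m : ℕ, 1 ≤ m ∧ k = 2*m+2 := by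
    obtain ⟨t, ht⟩ := hkeven
    exact ⟨t-1, by omega, by omega⟩
  have hx : (0:ℝ) < 2*(m:ℝ)+2 := by positivity
  have hy : (0:ℝ) < (2*(m:ℝ)+2)^2 * Real.sqrt (2*(m:ℝ)+2) := by positivity
  have hcast : ((2*m+2 : ℕ) : ℝ) = 2*(m:ℝ)+2 := by push_cast; ring
  have hrpow : ((2*m+2 : ℕ) : ℝ) ^ (-(5:ℝ)/2)
      = ((2*(m:ℝ)+2)^2 * Real.sqrt (2*(m:ℝ)+2))⁻¹ := by
    rw [hcast, show (-(5:ℝ)/2) = -((5:ℝ)/2) by ring, Real.rpow_neg hx.le]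
    congr 1
    rw [show ((5:ℝ)/2) = ((2:ℕ):ℝ) + (1/2 : ℝ) by norm_num, Real.rpow_add hx,
      Real.rpow_natCast, ← Real.sqrt_eq_rpow]
  have hmu : hermiteCoeff relu (2*m+2) ^ 2 = Bseq m / (2*π) := by
    rw [coeff_sq m]
    unfold Bseq
    rw [div_div]
    ring
  rw [hmu, hrpow]
  constructor
  · have hQ := Q_bound m hm1
    have h1 : 2/3 ≤ Bseq m * ((2*(m:ℝ)+2)^2 * Real.sqrt (2*(m:ℝ)+2)) := by
      refine hQ.trans ?_
      have hB := (Bseq_pos m).le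
      have hs : (0:ℝ) ≤ Real.sqrt (2*(m:ℝ)+2) := Real.sqrt_nonneg _
      calc Bseq m * ((2*(m:ℝ)+2) * Real.sqrt (2*(m:ℝ)+2) * (2*(m:ℝ)))
          ≤ Bseq m * ((2*(m:ℝ)+2) * Real.sqrt (2*(m:ℝ)+2) * (2*(m:ℝ)+2)) := by
            gcongr
            linarith
        _ = Bseq m * ((2*(m:ℝ)+2)^2 * Real.sqrt (2*(m:ℝ)+2)) := by ring
    have h2 : (2/3)/((2*(m:ℝ)+2)^2 * Real.sqrt (2*(m:ℝ)+2)) ≤ Bseq m :=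
      (div_le_iff₀ hy).2 (by linarith)
    calc 1/(3*π) * ((2*(m:ℝ)+2)^2 * Real.sqrt (2*(m:ℝ)+2))⁻¹
        = ((2/3)/((2*(m:ℝ)+2)^2 * Real.sqrt (2*(m:ℝ)+2)))/(2*π) := by
          rw [eq_div_iff (by positivity)]
          field_simp
      _ ≤ Bseq m / (2*π) := by gcongr
  · have hP := P_bound m hm1
    have h2 : Bseq m ≤ (4/3)/((2*(m:ℝ)+2)^2 * Real.sqrt (2*(m:ℝ)+2)) :=
      (le_div_iff₀ hy).2 (by linarith)
    calc Bseq m / (2*π)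
        ≤ ((4/3)/((2*(m:ℝ)+2)^2 * Real.sqrt (2*(m:ℝ)+2)))/(2*π) := by gcongr
      _ = 2/(3*π) * ((2*(m:ℝ)+2)^2 * Real.sqrt (2*(m:ℝ)+2))⁻¹ := by
          rw [eq_comm, eq_div_iff (by positivity)]
          field_simp
          ring
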